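/- For a polynomial ensemble with density (1/Z_N)Δ_N(x)·det[φ_l(x_k)], the expectation of the Schur polynomial s_λ(x_1,...,x_N) equals det[∫_I x^{λ_i+N−i} φ_j(x) dx]_{i,j=1}^N / det[∫_I x^{N−i} φ_j(x) dx]_{i,j=1}^N. -/

import Mathlib

open MeasureTheory

lemma pi_integral_prod {N : ℕ} (μ : Measure ℝ) [SigmaFinite μ] (f : Fin N → ℝ → ℝ)
    (hf : ∀ i, Integrable (f i) μ) :
    ∫ x : Fin N → ℝ, ∏ i, f i (x i) ∂(Measure.pi fun _ => μ) = ∏ i, ∫ t, f i t ∂μ :=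
  MeasureTheory.integral_fintype_prod_eq_prod (E := fun _ => ℝ) f
    (μ := fun _ => μ)

lemma pi_integrable_prod {N : ℕ} (μ : Measure ℝ) [SigmaFinite μ] (f : Fin N → ℝ → ℝ)
    (hf : ∀ i, Integrable (f i) μ) :
    Integrable (fun x : Fin N → ℝ => ∏ i, f i (x i)) (Measure.pi fun _ => μ) :=
  MeasureTheory.Integrable.fintype_prod (f := f) (μ := fun _ => μ) hf

lemma andreief {N : ℕ} (μ : Measure ℝ) [SigmaFinite μ] (f g : Fin N → ℝ → ℝ)
    (hfg : ∀ i j : Fin N, Integrable (fun t => f i t * g j t) μ) :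
    (∫ x : Fin N → ℝ,
        Matrix.det (Matrix.of fun k j : Fin N => f j (x k)) *
        Matrix.det (Matrix.of fun k j : Fin N => g j (x k)) ∂(Measure.pi fun _ => μ))
      = (N.factorial : ℝ) *
        Matrix.det (Matrix.of fun i j : Fin N => ∫ t, f i t * g j t ∂μ) := by
  classical
  have key : ∀ x : Fin N → ℝ,
      Matrix.det (Matrix.of fun k j : Fin N => f j (x k)) *
      Matrix.det (Matrix.of fun k j : Fin N => g j (x k))
      = ∑ σ : Equiv.Perm (Fin N), ∑ τ : Equiv.Perm (Fin N),
          ((Equiv.Perm.sign σ : ℝ) * (Equiv.Perm.sign τ : ℝ)) *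
            ∏ k, (f (σ k) (x k) * g (τ k) (x k)) := by
    intro x
    rw [← Matrix.det_transpose (Matrix.of fun k j => f j (x k)),
        ← Matrix.det_transpose (Matrix.of fun k j => g j (x k)),
        Matrix.det_apply', Matrix.det_apply', Finset.sum_mul_sum]
    refine Finset.sum_congr rfl fun σ _ => Finset.sum_congr rfl fun τ _ => ?_
    rw [Finset.prod_mul_distrib]
    simp [Matrix.transpose_apply, Matrix.of_apply]
    ring
  simp_rw [key]
  have hi : ∀ σ τ : Equiv.Perm (Fin N),
      Integrable (fun x : Fin N → ℝ => ∏ k, (f (σ k) (x k) * g (τ k) (x k)))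
        (Measure.pi fun _ => μ) := by
    intro σ τ
    exact pi_integrable_prod μ (fun k => fun t => f (σ k) t * g (τ k) t)
      (fun k => hfg _ _)
  rw [integral_finset_sum _ (fun σ _ => integrable_finset_sum _
        (fun τ _ => ((hi σ τ).const_mul _)))]
  have : ∀ σ : Equiv.Perm (Fin N),
      (∫ x : Fin N → ℝ, ∑ τ : Equiv.Perm (Fin N),
        ((Equiv.Perm.sign σ : ℝ) * (Equiv.Perm.sign τ : ℝ)) *
          ∏ k, (f (σ k) (x k) * g (τ k) (x k)) ∂(Measure.pi fun _ => μ))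
      = ∑ τ : Equiv.Perm (Fin N),
          ((Equiv.Perm.sign σ : ℝ) * (Equiv.Perm.sign τ : ℝ)) *
            ∏ k, ∫ t, f (σ k) t * g (τ k) t ∂μ := by
    intro σ
    rw [integral_finset_sum _ (fun τ _ => ((hi σ τ).const_mul _))]
    refine Finset.sum_congr rfl fun τ _ => ?_
    rw [MeasureTheory.integral_const_mul, pi_integral_prod μ (fun k => fun t => f (σ k) t * g (τ k) t)
      (fun k => hfg _ _)]
  simp_rw [this]
  -- now pure algebra
  have step : ∀ σ : Equiv.Perm (Fin N),
      (∑ τ : Equiv.Perm (Fin N),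
          ((Equiv.Perm.sign σ : ℝ) * (Equiv.Perm.sign τ : ℝ)) *
            ∏ k, ∫ t, f (σ k) t * g (τ k) t ∂μ)
      = Matrix.det (Matrix.of fun i j : Fin N => ∫ t, f i t * g j t ∂μ) := by
    intro σ
    rw [← Equiv.sum_comp (Equiv.mulRight σ) (fun τ => ((Equiv.Perm.sign σ : ℝ) *
      (Equiv.Perm.sign τ : ℝ)) * ∏ k, ∫ t, f (σ k) t * g (τ k) t ∂μ)]
    have hdet : Matrix.det (Matrix.of fun i j : Fin N => ∫ t, f i t * g j t ∂μ)
        = ∑ ρ : Equiv.Perm (Fin N), (Equiv.Perm.sign ρ : ℝ) *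
            ∏ k, ∫ t, f k t * g (ρ k) t ∂μ := by
      rw [← Matrix.det_transpose, Matrix.det_apply']
      rfl
    rw [hdet]
    refine Finset.sum_congr rfl fun ρ _ => ?_
    have h1 : ((Equiv.Perm.sign σ : ℝ) * (Equiv.Perm.sign (Equiv.mulRight σ ρ) : ℝ))
        = (Equiv.Perm.sign ρ : ℝ) := by
      simp [Equiv.coe_mulRight]
      push_cast
      rw [mul_comm]
      rw [mul_assoc]
      norm_num [← Int.cast_mul, Int.units_mul_self]
    have h2 : ∏ k, ∫ t, f (σ k) t * g ((Equiv.mulRight σ ρ) k) t ∂μ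
        = ∏ k, ∫ t, f k t * g (ρ k) t ∂μ := by
      have := Equiv.prod_comp σ (fun k => ∫ t, f k t * g (ρ k) t ∂μ)
      simpa [Equiv.coe_mulRight] using this
    rw [h1, h2]
  simp_rw [step]
  rw [Finset.sum_const, Finset.card_univ, Fintype.card_perm]
  simp [nsmul_eq_mul]

/-- expectation of a Schur polynomial in a polynomial ensemble. For the
polynomial ensemble `(1/Z_N) Δ_N(x) det[φ_l(x_k)]` on `I^N` and a partition
`λ_1 ≥ ... ≥ λ_N ≥ 0`, using `s_λ(x) Δ_N(x) = det[x_i^{λ_j + N - j}]` we have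
`𝔼[s_λ] = det[∫_I x^{λ_i+N−i} φ_j(x) dx] / det[∫_I x^{N−i} φ_j(x) dx]`
(equivalently, the ratio of the two ensemble integrals on the left equals the ratio of
moment determinants on the right; indices are zero-based so `N - i` becomes `N - 1 - i`). -/
theorem polynomial_ensemble_schur_expectation (N : ℕ) (I : Set ℝ) (hI : MeasurableSet I)
    (φ : Fin N → ℝ → ℝ) (hφ : ∀ j, Measurable (φ j))
    (l : Fin N → ℕ) (hl : ∀ i j : Fin N, i ≤ j → l j ≤ l i)
    (hmom : ∀ (m : ℕ) (j : Fin N), IntegrableOn (fun t => t ^ m * φ j t) I)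
    (hint1 : Integrable
      (fun x : Fin N → ℝ =>
        Matrix.det (Matrix.of fun i j : Fin N => x i ^ (l j + (N - 1 - (j : ℕ)))) *
          Matrix.det (Matrix.of fun k j : Fin N => φ j (x k)))
      (Measure.pi fun _ => volume.restrict I))
    (hint2 : Integrable
      (fun x : Fin N → ℝ =>
        Matrix.det (Matrix.of fun i j : Fin N => x i ^ (N - 1 - (j : ℕ))) *
          Matrix.det (Matrix.of fun k j : Fin N => φ j (x k)))
      (Measure.pi fun _ => volume.restrict I))
    (hZ : Matrix.det (Matrix.of fun i j : Fin N => ∫ t in I, t ^ (N - 1 - (i : ℕ)) * φ j t) ≠ 0) :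
    (∫ x : Fin N → ℝ,
        Matrix.det (Matrix.of fun i j : Fin N => x i ^ (l j + (N - 1 - (j : ℕ)))) *
          Matrix.det (Matrix.of fun k j : Fin N => φ j (x k))
        ∂(Measure.pi fun _ => volume.restrict I)) /
      (∫ x : Fin N → ℝ,
        Matrix.det (Matrix.of fun i j : Fin N => x i ^ (N - 1 - (j : ℕ))) *
          Matrix.det (Matrix.of fun k j : Fin N => φ j (x k))
        ∂(Measure.pi fun _ => volume.restrict I))
      = Matrix.det (Matrix.of fun i j : Fin N =>
            ∫ t in I, t ^ (l i + (N - 1 - (i : ℕ))) * φ j t) /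
          Matrix.det (Matrix.of fun i j : Fin N =>
            ∫ t in I, t ^ (N - 1 - (i : ℕ)) * φ j t) := by
  have hA : (∫ x : Fin N → ℝ,
        Matrix.det (Matrix.of fun i j : Fin N => x i ^ (l j + (N - 1 - (j : ℕ)))) *
          Matrix.det (Matrix.of fun k j : Fin N => φ j (x k))
        ∂(Measure.pi fun _ => volume.restrict I))
      = (N.factorial : ℝ) * Matrix.det (Matrix.of fun i j : Fin N =>
            ∫ t in I, t ^ (l i + (N - 1 - (i : ℕ))) * φ j t) :=
    andreief (volume.restrict I) (fun i t => t ^ (l i + (N - 1 - (i : ℕ)))) φ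
      (fun i j => hmom _ j)
  have hB : (∫ x : Fin N → ℝ,
        Matrix.det (Matrix.of fun i j : Fin N => x i ^ (N - 1 - (j : ℕ))) *
          Matrix.det (Matrix.of fun k j : Fin N => φ j (x k))
        ∂(Measure.pi fun _ => volume.restrict I))
      = (N.factorial : ℝ) * Matrix.det (Matrix.of fun i j : Fin N =>
            ∫ t in I, t ^ (N - 1 - (i : ℕ)) * φ j t) :=
    andreief (volume.restrict I) (fun i t => t ^ (N - 1 - (i : ℕ))) φ
      (fun i j => hmom _ j)
  rw [hA, hB, mul_div_mul_left _ _ (by exact_mod_cast N.factorial_ne_zero)]
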